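/- Under the hypotheses of the discretization proposition (each region contains at most one robot and has ρ-mass at most 1/N), the discretized error μ satisfies μ ≥ 2 − 2N·max_i ∫_{Ω_i} ρ dz; in particular if every region has ρ-mass at most ε/N then μ ≥ 2 − 2ε, so μ approaches its theoretical maximum 2 as the regions shrink, regardless of robot positions. -/

import Mathlib

open MeasureTheory Finset

open Classical in
/-- Under the hypotheses of the discretization proposition (each region contains at most
one robot and has `ρ`-mass at most `1/N`, bounded by `c`), the discretized error
satisfies `μ ≥ 2 − 2N·c` for any uniform bound `c` on the region masses; in particular
if every region has mass at most `ε/N` then `μ ≥ 2 − 2ε`. -/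
theorem discretized_error_lower_bound {d M N : ℕ} (hN : 0 < N)
    (Ω : Set (Fin d → ℝ)) (A : Fin M → Set (Fin d → ℝ))
    (hAmeas : ∀ i, MeasurableSet (A i))
    (hdisj : Pairwise fun i j => Disjoint (A i) (A j))
    (hcover : (⋃ i, A i) = Ω)
    (ρ : (Fin d → ℝ) → ℝ) (hρ0 : ∀ z ∈ Ω, 0 ≤ ρ z)
    (hρint : IntegrableOn ρ Ω) (hρ1 : ∫ z in Ω, ρ z = 1)
    (x : Fin N → (Fin d → ℝ)) (hxΩ : ∀ j, x j ∈ Ω) (hxdist : Function.Injective x)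
    (hone : ∀ i, ({j | x j ∈ A i} : Finset (Fin N)).card ≤ 1)
    (hsmall : ∀ i, ∫ z in A i, ρ z ≤ 1 / N)
    (c : ℝ) (hc : ∀ i, ∫ z in A i, ρ z ≤ c) :
    2 - 2 * N * c ≤
      ∑ i : Fin M, |(∫ z in A i, ρ z) -
        (({j | x j ∈ A i} : Finset (Fin N)).card : ℝ) / N| := by
  classical
  set m : Fin M → ℝ := fun i => ∫ z in A i, ρ z with hm
  set n : Fin M → ℕ := fun i => ({j | x j ∈ A i} : Finset (Fin N)).card with hn
  have hAsub : ∀ i, A i ⊆ Ω := fun i => hcover ▸ Set.subset_iUnion A i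
  have hm0 : ∀ i, 0 ≤ m i := fun i =>
    setIntegral_nonneg (hAmeas i) (fun z hz => hρ0 z (hAsub i hz))
  -- sum of masses = 1
  have hsum_m : ∑ i, m i = 1 := by
    have := MeasureTheory.integral_iUnion (μ := volume) hAmeas hdisj
      (by rwa [hcover])
    rw [hcover, hρ1] at this
    rw [hm]
    rw [← tsum_fintype (L := SummationFilter.unconditional _)]
    exact this.symm
  -- choose region for each robot
  have hex : ∀ j, ∃ i, x j ∈ A i := fun j => Set.mem_iUnion.mp (hcover ▸ hxΩ j)
  choose f hf using hex
  have hmem : ∀ i j, x j ∈ A i ↔ f j = i := by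
    intro i j
    constructor
    · intro h
      by_contra hne
      exact Set.disjoint_left.mp (hdisj hne) (hf j) h
    · rintro rfl; exact hf j
  have hfilt : ∀ i, ({j | x j ∈ A i} : Finset (Fin N)) =
      Finset.univ.filter (fun j => f j = i) := by
    intro i
    ext j
    simp [hmem i j]
  have hsum_n : ∑ i, n i = N := by
    have := Finset.card_eq_sum_card_fiberwise
      (f := f) (s := (Finset.univ : Finset (Fin N))) (t := Finset.univ)
      (fun j _ => Finset.mem_univ (f j))
    simp only [Finset.card_univ, Fintype.card_fin] at this
    rw [hn]
    simp only [hfilt]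
    exact this.symm
  set s : Finset (Fin M) := Finset.univ.filter (fun i => n i = 1) with hs
  have hns : ∀ i ∈ s, n i = 1 := fun i hi => (Finset.mem_filter.mp hi).2
  have hns' : ∀ i ∉ s, n i = 0 := by
    intro i hi
    have h1 : n i ≤ 1 := hone i
    have : n i ≠ 1 := by simpa [hs] using hi
    omega
  have hcard_s : s.card = N := by
    have : ∑ i, n i = ∑ i ∈ s, n i := by
      rw [← Finset.sum_filter_add_sum_filter_not Finset.univ (fun i => n i = 1)]
      have : ∑ i ∈ Finset.univ.filter (fun i => ¬ n i = 1), n i = 0 := by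
        apply Finset.sum_eq_zero
        intro i hi
        exact hns' i (by simpa [hs] using (Finset.mem_filter.mp hi).2)
      rw [this, add_zero]
    rw [hsum_n] at this
    have : (N : ℕ) = ∑ i ∈ s, 1 := by
      rw [this]; exact Finset.sum_congr rfl hns
    simpa using this.symm
  -- pointwise bound
  have hpt : ∀ i, (if i ∈ s then 1 / (N:ℝ) - m i else m i) ≤ |m i - (n i : ℝ) / N| := by
    intro i
    by_cases hi : i ∈ s
    · simp only [hi, if_true, hns i hi]
      rw [abs_sub_comm, abs_of_nonneg]
      · norm_num
      · have := hsmall i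
        simp only [Nat.cast_one]
        linarith
    · simp only [hi, if_false, hns' i hi]
      simp only [Nat.cast_zero, zero_div, sub_zero]
      exact le_abs_self _
  calc 2 - 2 * N * c ≤ ∑ i, (if i ∈ s then 1 / (N:ℝ) - m i else m i) := by
        have h1 : ∑ i ∈ s, (1 / (N:ℝ) - m i) = 1 - ∑ i ∈ s, m i := by
          rw [Finset.sum_sub_distrib, Finset.sum_const, hcard_s]
          have : (N : ℝ) ≠ 0 := Nat.cast_ne_zero.mpr hN.ne'
          simp only [nsmul_eq_mul]
          field_simp
        have hsplit : ∑ i ∈ s, m i + ∑ i ∈ sᶜ, m i = 1 := by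
          rw [Finset.sum_add_sum_compl, hsum_m]
        have hsm : ∑ i ∈ s, m i ≤ N * c := by
          have := Finset.sum_le_card_nsmul s m c (fun i _ => hc i)
          rwa [hcard_s, nsmul_eq_mul] at this
        have : ∑ i ∈ s, (if i ∈ s then 1 / (N:ℝ) - m i else m i)
            + ∑ i ∈ sᶜ, (if i ∈ s then 1 / (N:ℝ) - m i else m i)
            = ∑ i ∈ s, (1 / (N:ℝ) - m i) + ∑ i ∈ sᶜ, m i := by
          congr 1
          · exact Finset.sum_congr rfl fun i hi => by simp [hi]
          · exact Finset.sum_congr rfl fun i hi => by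
              simp [Finset.mem_compl.mp hi]
        rw [← Finset.sum_add_sum_compl s, this, h1]
        linarith
    _ ≤ ∑ i, |m i - (n i : ℝ) / N| := Finset.sum_le_sum fun i _ => hpt i
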